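/- Let P ∈ ℚ⟦X⟧ be the formal power series with constant coefficient 1 satisfying P = 1 + 3·X·P², and let y := X·(P·(4 − P)/3)² ∈ ℚ⟦X⟧. Let W ∈ ℚ⟦X⟧ be the unique formal power series with zero constant coefficient satisfying (P − 1)·(W² + W + 1) = 3·W, and let Y ∈ ℚ⟦T⟧ be the unique formal power series with zero constant coefficient satisfying (Q − 1)·(Y² + 1) = Y, where Q ∈ ℚ⟦T⟧ has constant coefficient 1 and satisfies Q = 1 + T·Q³. Then the substitution of y into Y equals W in ℚ⟦X⟧. -/

import Mathlib

open PowerSeries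

/-- Substitution of the power series `f` (assumed to have zero constant coefficient)
into the power series `g`. -/
noncomputable def substInto (f g : PowerSeries ℚ) : PowerSeries ℚ :=
  PowerSeries.mk fun n =>
    PowerSeries.coeff n (Polynomial.aeval f (PowerSeries.trunc (n + 1) g))

private lemma coeff_aeval_eq_zero {f : PowerSeries ℚ} (hf : constantCoeff f = 0)
    {n : ℕ} {p : Polynomial ℚ} (hp : ∀ k ≤ n, p.coeff k = 0) :
    coeff n (Polynomial.aeval f p) = 0 := by
  obtain ⟨q, hq⟩ := Polynomial.X_pow_dvd_iff.mpr
    (fun d hd => hp d (Nat.lt_succ_iff.mp hd))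
  have hXf : (X : PowerSeries ℚ) ∣ f := X_dvd_iff.mpr hf
  have hdvd : (X : PowerSeries ℚ) ^ (n + 1) ∣ Polynomial.aeval f p := by
    rw [hq, map_mul, map_pow, Polynomial.aeval_X]
    exact Dvd.dvd.mul_right (pow_dvd_pow_of_dvd hXf _) _
  exact X_pow_dvd_iff.mp hdvd n (Nat.lt_succ_self n)

private lemma coeff_substInto {f : PowerSeries ℚ} (hf : constantCoeff f = 0)
    (g : PowerSeries ℚ) (n : ℕ) (p : Polynomial ℚ)
    (hp : ∀ k ≤ n, p.coeff k = coeff k g) :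
    coeff n (substInto f g) = coeff n (Polynomial.aeval f p) := by
  have h0 : coeff n (Polynomial.aeval f (p - trunc (n + 1) g)) = 0 :=
    coeff_aeval_eq_zero hf (fun k hk => by
      simp [Polynomial.coeff_sub, coeff_trunc, Nat.lt_succ_iff.mpr hk, hp k hk])
  rw [map_sub, map_sub] at h0
  simp only [substInto, coeff_mk]
  linarith

private lemma substInto_add {f : PowerSeries ℚ} (hf : constantCoeff f = 0)
    (g h : PowerSeries ℚ) :
    substInto f (g + h) = substInto f g + substInto f h := by
  ext n
  have h' : ∀ k ≤ n, (trunc (n + 1) g + trunc (n + 1) h).coeff k = coeff k (g + h) := by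
    intro k hk
    simp [Polynomial.coeff_add, coeff_trunc, Nat.lt_succ_iff.mpr hk]
  rw [coeff_substInto hf _ n _ h', map_add, map_add, map_add]
  simp [substInto, coeff_mk]

private lemma substInto_sub {f : PowerSeries ℚ} (hf : constantCoeff f = 0)
    (g h : PowerSeries ℚ) :
    substInto f (g - h) = substInto f g - substInto f h := by
  ext n
  have h' : ∀ k ≤ n, (trunc (n + 1) g - trunc (n + 1) h).coeff k = coeff k (g - h) := by
    intro k hk
    simp [Polynomial.coeff_sub, coeff_trunc, Nat.lt_succ_iff.mpr hk]
  rw [coeff_substInto hf _ n _ h', map_sub, map_sub, map_sub]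
  simp [substInto, coeff_mk]

private lemma substInto_mul {f : PowerSeries ℚ} (hf : constantCoeff f = 0)
    (g h : PowerSeries ℚ) :
    substInto f (g * h) = substInto f g * substInto f h := by
  ext n
  have h' : ∀ k ≤ n, (trunc (n + 1) g * trunc (n + 1) h).coeff k = coeff k (g * h) := by
    intro k hk
    rw [Polynomial.coeff_mul, PowerSeries.coeff_mul]
    apply Finset.sum_congr rfl
    intro x hx
    have hx' := Finset.HasAntidiagonal.mem_antidiagonal.mp hx
    have h1 : x.1 < n + 1 := by omega
    have h2 : x.2 < n + 1 := by omega
    simp [coeff_trunc, h1, h2]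
  rw [coeff_substInto hf _ n _ h', map_mul, PowerSeries.coeff_mul, PowerSeries.coeff_mul]
  apply Finset.sum_congr rfl
  intro x hx
  have hx' := Finset.HasAntidiagonal.mem_antidiagonal.mp hx
  have e1 : coeff x.1 (substInto f g) = coeff x.1 (Polynomial.aeval f (trunc (n + 1) g)) :=
    coeff_substInto hf g x.1 _ (fun k hk => by
      simp [coeff_trunc, show k < n + 1 by omega])
  have e2 : coeff x.2 (substInto f h) = coeff x.2 (Polynomial.aeval f (trunc (n + 1) h)) :=
    coeff_substInto hf h x.2 _ (fun k hk => by
      simp [coeff_trunc, show k < n + 1 by omega])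
  rw [e1, e2]

private lemma substInto_one {f : PowerSeries ℚ} (hf : constantCoeff f = 0) :
    substInto f 1 = 1 := by
  ext n
  rw [coeff_substInto hf 1 n 1 (fun k hk => by
    simp [Polynomial.coeff_one, PowerSeries.coeff_one])]
  simp

private lemma substInto_X {f : PowerSeries ℚ} (hf : constantCoeff f = 0) :
    substInto f X = f := by
  ext n
  rw [coeff_substInto hf X n Polynomial.X (fun k hk => by
    simp [Polynomial.coeff_X, PowerSeries.coeff_X, eq_comm])]
  simp

private lemma substInto_pow {f : PowerSeries ℚ} (hf : constantCoeff f = 0)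
    (g : PowerSeries ℚ) (m : ℕ) :
    substInto f (g ^ m) = substInto f g ^ m := by
  induction m with
  | zero => simpa using substInto_one hf
  | succ m ih => rw [pow_succ, substInto_mul hf, ih, pow_succ]

/-- Let `P(0) = 1` with `P = 1 + 3XP²` and `y := X·(P·(4−P)/3)²`. Let `W(0) = 0`
satisfy `(P−1)·(W² + W + 1) = 3W` and `Y(0) = 0` satisfy `(Q−1)·(Y² + 1) = Y`,
where `Q(0) = 1` and `Q = 1 + T·Q³`. Then substituting `y` into `Y` gives `W`. -/
theorem subst_X_series_quad
    (P Q W Y : PowerSeries ℚ)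
    (hP0 : constantCoeff P = 1) (hP : P = 1 + 3 * X * P ^ 2)
    (hQ0 : constantCoeff Q = 1) (hQ : Q = 1 + X * Q ^ 3)
    (hW0 : constantCoeff W = 0) (hW : (P - 1) * (W ^ 2 + W + 1) = 3 * W)
    (hY0 : constantCoeff Y = 0) (hY : (Q - 1) * (Y ^ 2 + 1) = Y) :
    substInto (X * (P * (4 - P) * (3 : PowerSeries ℚ)⁻¹) ^ 2) Y = W := by
  set y : PowerSeries ℚ := X * (P * (4 - P) * (3 : PowerSeries ℚ)⁻¹) ^ 2 with hy_def
  have hy0 : constantCoeff y = 0 := by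
    rw [hy_def, map_mul, constantCoeff_X, zero_mul]
  have hcc_ne : ∀ {g : PowerSeries ℚ}, constantCoeff g ≠ 0 → g ≠ 0 := by
    intro g hg hg0
    exact hg (by rw [hg0]; simp)
  -- basic nonzero facts
  have h3cc : constantCoeff (3 : PowerSeries ℚ) = 3 := map_ofNat _ 3
  have h3ne : (3 : PowerSeries ℚ) ≠ 0 := hcc_ne (by rw [h3cc]; norm_num)
  have h3 : (3 : PowerSeries ℚ) * (3 : PowerSeries ℚ)⁻¹ = 1 :=
    PowerSeries.mul_inv_cancel _ (by rw [h3cc]; norm_num)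
  have hBcc : constantCoeff (W ^ 2 + 1) = 1 := by simp [hW0]
  have hu : (W ^ 2 + 1) * (W ^ 2 + 1)⁻¹ = 1 :=
    PowerSeries.mul_inv_cancel _ (by rw [hBcc]; norm_num)
  set u : PowerSeries ℚ := (W ^ 2 + 1)⁻¹ with hu_def
  -- the key algebraic identity : y * (W²+W+1)³ = W * (W²+1)²
  have hXPA3 : 3 * (X * P ^ 2 * (W ^ 2 + W + 1)) = 3 * W := by
    linear_combination hW - (W ^ 2 + W + 1) * hP
  have hXPA : X * P ^ 2 * (W ^ 2 + W + 1) = W := mul_left_cancel₀ h3ne hXPA3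
  have h4PA : (4 - P) * (W ^ 2 + W + 1) = 3 * (W ^ 2 + 1) := by
    linear_combination -hW
  have h9y : 9 * y = X * (P * (4 - P)) ^ 2 := by
    rw [hy_def]
    linear_combination (X * P ^ 2 * (4 - P) ^ 2 * (3 * (3 : PowerSeries ℚ)⁻¹ + 1)) * h3
  have hkey9 : (9 * (W ^ 2 + W + 1)) * (y * (W ^ 2 + W + 1) ^ 3) =
      (9 * (W ^ 2 + W + 1)) * (W * (W ^ 2 + 1) ^ 2) := by
    linear_combination (W ^ 2 + W + 1) ^ 4 * h9y +
      X * P ^ 2 * (W ^ 2 + W + 1) ^ 2 *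
        ((4 - P) * (W ^ 2 + W + 1) + 3 * (W ^ 2 + 1)) * h4PA +
      9 * (W ^ 2 + 1) ^ 2 * (W ^ 2 + W + 1) * hXPA
  have h9Ane : (9 * (W ^ 2 + W + 1) : PowerSeries ℚ) ≠ 0 := by
    apply hcc_ne
    simp only [map_mul, map_add, map_pow, map_one, map_ofNat, hW0]
    norm_num
  have hkey : y * (W ^ 2 + W + 1) ^ 3 = W * (W ^ 2 + 1) ^ 2 :=
    mul_left_cancel₀ h9Ane hkey9
  -- R := 1 + W·u satisfies R = 1 + y R³
  have hBne : ((W ^ 2 + 1 : PowerSeries ℚ)) ^ 3 ≠ 0 :=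
    pow_ne_zero _ (hcc_ne (by rw [hBcc]; norm_num))
  have hcalc : (W ^ 2 + 1) ^ 3 * (y * (1 + W * u) ^ 3) = (W ^ 2 + 1) ^ 3 * (W * u) := by
    calc (W ^ 2 + 1) ^ 3 * (y * (1 + W * u) ^ 3)
        = y * ((W ^ 2 + 1) + W * ((W ^ 2 + 1) * u)) ^ 3 := by ring
      _ = y * (W ^ 2 + W + 1) ^ 3 := by rw [hu]; ring_nf
      _ = W * (W ^ 2 + 1) ^ 2 := hkey
      _ = W * (W ^ 2 + 1) ^ 2 * ((W ^ 2 + 1) * u) := by rw [hu]; ring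
      _ = (W ^ 2 + 1) ^ 3 * (W * u) := by ring
  have hR : 1 + W * u = 1 + y * (1 + W * u) ^ 3 := by
    have h := mul_left_cancel₀ hBne hcalc
    linear_combination -h
  -- Q̂ := substInto y Q satisfies the same equation
  set Qh : PowerSeries ℚ := substInto y Q with hQh_def
  set Z : PowerSeries ℚ := substInto y Y with hZ_def
  have hQhat : Qh = 1 + y * Qh ^ 3 := by
    have := congrArg (substInto y) hQ
    rwa [substInto_add hy0, substInto_one hy0, substInto_mul hy0, substInto_X hy0,
      substInto_pow hy0] at this
  have hZeq : (Qh - 1) * (Z ^ 2 + 1) = Z := by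
    have := congrArg (substInto y) hY
    simpa only [substInto_mul hy0, substInto_sub hy0, substInto_one hy0, substInto_add hy0,
      substInto_pow hy0] using this
  -- uniqueness: Qh = 1 + W·u
  have hQhR : Qh = 1 + W * u := by
    have hD : (Qh - (1 + W * u)) * (1 - y * (Qh ^ 2 + Qh * (1 + W * u) + (1 + W * u) ^ 2)) = 0 := by
      linear_combination hQhat - hR
    rcases mul_eq_zero.mp hD with h | h
    · exact sub_eq_zero.mp h
    · exfalso
      have := congrArg (constantCoeff) h
      simp [hy0] at this
  -- conclude Z = W
  have hWeq : (Qh - 1) * (W ^ 2 + 1) = W := by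
    rw [hQhR]
    calc (1 + W * u - 1) * (W ^ 2 + 1) = W * ((W ^ 2 + 1) * u) := by ring
      _ = W := by rw [hu]; ring
  have hD : (Z - W) * ((Qh - 1) * (Z + W) - 1) = 0 := by
    linear_combination hZeq - hWeq
  rcases mul_eq_zero.mp hD with h | h
  · have := sub_eq_zero.mp h
    rw [hZ_def] at this
    exact this
  · exfalso
    have hc := congrArg (constantCoeff) h
    rw [hQhR] at hc
    simp [hW0] at hc
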